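/- Let I ⊆ ℝ be an open interval, N ∈ (1,∞), K ∈ ℝ, ψ : I → ℝ a C² function, and ρ := e^{−ψ}. Assume that for all s < t in I (with t − s < π√((N−1)/K) in case K > 0) and all λ ∈ (0,1), ρ((1−λ)s + λt) ≥ ( σ^{(1−λ)}_{K/(N−1)}(t−s) · ρ(s)^{1/(N−1)} + σ^{(λ)}_{K/(N−1)}(t−s) · ρ(t)^{1/(N−1)} )^{N−1}. Then ψ''(t) − ψ'(t)²/(N−1) ≥ K for every t ∈ I; equivalently, (ρ^{1/(N−1)})'' + (K/(N−1)) ρ^{1/(N−1)} ≤ 0 on I. -/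

import Mathlib

/-- The comparison function `s_κ`: solution of `f'' + κ f = 0`, `f(0) = 0`, `f'(0) = 1`. -/
noncomputable def sk (κ r : ℝ) : ℝ :=
  if 0 < κ then Real.sin (Real.sqrt κ * r) / Real.sqrt κ
  else if κ = 0 then r
  else Real.sinh (Real.sqrt (-κ) * r) / Real.sqrt (-κ)

/-- The distortion coefficient `σ^{(λ)}_κ(r) = s_κ(λ r)/s_κ(r)`, with `σ^{(λ)}_κ(0) = λ`. -/
noncomputable def sigmaCoeff (κ lam r : ℝ) : ℝ :=
  if r = 0 then lam else sk κ (lam * r) / sk κ r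

open Set Filter Real
open scoped Topology

lemma taylor_one_sided {u : ℝ → ℝ} {s : Set ℝ} (hs : IsOpen s) (hu : ContDiffOn ℝ 2 u s)
    {a b : ℝ} (hab : a < b) (hsub : Set.Icc a b ⊆ s) :
    ∃ ξ ∈ Set.Ioo a b, u b = u a + deriv u a * (b - a) + deriv (deriv u) ξ * (b - a) ^ 2 / 2 := by
  have hu1 : ContDiffOn ℝ 1 u (Set.Icc a b) := (hu.of_le one_le_two).mono hsub
  have hdu : ContDiffOn ℝ 1 (deriv u) s := hu.deriv_of_isOpen hs le_rfl
  have hIcc1 : ∀ y ∈ Set.Ioo a b, iteratedDerivWithin 1 u (Set.Icc a b) y = deriv u y := by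
    intro y hy
    rw [iteratedDerivWithin_one,
      derivWithin_of_mem_nhds (Icc_mem_nhds hy.1 hy.2)]
  have hder : DifferentiableOn ℝ (iteratedDerivWithin 1 u (Set.Icc a b)) (Set.Ioo a b) := by
    apply DifferentiableOn.congr ((hdu.differentiableOn one_ne_zero).mono
      (subset_trans Set.Ioo_subset_Icc_self hsub)) hIcc1
  obtain ⟨ξ, hξ, H⟩ := taylor_mean_remainder_lagrange (n := 1) hab.ne (by rwa [uIcc_of_le hab.le]) (by rwa [uIcc_of_le hab.le, uIoo_of_le hab.le])
  rw [uIcc_of_le hab.le] at H; rw [uIoo_of_le hab.le] at hξ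
  refine ⟨ξ, hξ, ?_⟩
  have h2 : iteratedDerivWithin 2 u (Set.Icc a b) ξ = deriv (deriv u) ξ := by
    have huds : UniqueDiffWithinAt ℝ (Set.Icc a b) ξ :=
      (uniqueDiffOn_Icc hab) ξ (Set.Ioo_subset_Icc_self hξ)
    rw [show (2 : ℕ) = 1 + 1 from rfl, iteratedDerivWithin_succ,
      derivWithin_of_mem_nhds (Icc_mem_nhds hξ.1 hξ.2)]
    apply Filter.EventuallyEq.deriv_eq
    filter_upwards [Ioo_mem_nhds hξ.1 hξ.2] with y hy using hIcc1 y hy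
  have htay : taylorWithinEval u 1 (Set.Icc a b) a b = u a + deriv u a * (b - a) := by
    rw [taylorWithinEval_succ, taylor_within_zero_eval]
    have : derivWithin u (Set.Icc a b) a = deriv u a := by
      apply DifferentiableAt.derivWithin
      · exact (hu.differentiableOn two_ne_zero).differentiableAt
          (hs.mem_nhds (hsub (Set.left_mem_Icc.2 hab.le)))
      · exact (uniqueDiffOn_Icc hab) a (Set.left_mem_Icc.2 hab.le)
    simp [iteratedDerivWithin_one, this]
    ring
  rw [htay] at H
  norm_num [Nat.factorial] at H
  rw [h2] at H
  linarith

lemma taylor_one_sided_left {u : ℝ → ℝ} {s : Set ℝ} (hs : IsOpen s) (hu : ContDiffOn ℝ 2 u s)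
    {a b : ℝ} (hab : a < b) (hsub : Set.Icc a b ⊆ s) :
    ∃ ξ ∈ Set.Ioo a b, u a = u b - deriv u b * (b - a) + deriv (deriv u) ξ * (b - a) ^ 2 / 2 := by
  set r : ℝ → ℝ := fun y => a + b - y with hr
  set s' : Set ℝ := r ⁻¹' s with hs'def
  have hrc : Continuous r := by fun_prop
  have hs' : IsOpen s' := hs.preimage hrc
  have hvc : ContDiffOn ℝ 2 (u ∘ r) s' :=
    hu.comp ((contDiff_const.sub contDiff_id).contDiffOn) (fun y hy => hy)
  have hsub' : Set.Icc a b ⊆ s' := by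
    intro y hy
    have : r y ∈ Set.Icc a b := ⟨by simp [hr]; linarith [hy.2], by simp [hr]; linarith [hy.1]⟩
    exact hsub this
  obtain ⟨ξ, hξ, H⟩ := taylor_one_sided hs' hvc hab hsub'
  have hmemr : ∀ y, y ∈ s' → r y ∈ s := fun y hy => hy
  have hd1 : ∀ y ∈ s', HasDerivAt (u ∘ r) (-deriv u (r y)) y := by
    intro y hy
    have h1 : HasDerivAt u (deriv u (r y)) (r y) :=
      ((hu.differentiableOn two_ne_zero).differentiableAt (hs.mem_nhds (hmemr y hy))).hasDerivAt
    have h2 : HasDerivAt r (-1) y := by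
      simpa using (hasDerivAt_id y).const_sub (a + b)
    simpa using h1.comp y h2
  have hderiv_eq : ∀ y ∈ s', deriv (u ∘ r) y = -deriv u (r y) := fun y hy => (hd1 y hy).deriv
  have ha' : a ∈ s' := hsub' (Set.left_mem_Icc.2 hab.le)
  have hξ' : ξ ∈ s' := hsub' (Set.Ioo_subset_Icc_self hξ)
  have hra : r a = b := by simp [hr]
  have hd2 : deriv (deriv (u ∘ r)) ξ = deriv (deriv u) (r ξ) := by
    have heq : deriv (u ∘ r) =ᶠ[𝓝 ξ] fun y => -deriv u (r y) := by
      filter_upwards [hs'.mem_nhds hξ'] with y hy using hderiv_eq y hy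
    rw [heq.deriv_eq]
    have h1 : HasDerivAt (deriv u) (deriv (deriv u) (r ξ)) (r ξ) :=
      (((hu.deriv_of_isOpen hs le_rfl : ContDiffOn ℝ 1 (deriv u) s).differentiableOn one_ne_zero).differentiableAt
        (hs.mem_nhds (hmemr ξ hξ'))).hasDerivAt
    have h2 : HasDerivAt r (-1) ξ := by
      simpa using (hasDerivAt_id ξ).const_sub (a + b)
    have := (h1.comp ξ h2).neg
    simpa [Function.comp_def] using this.deriv
  have hrξ : r ξ ∈ Set.Ioo a b := ⟨by simp [hr]; linarith [hξ.2], by simp [hr]; linarith [hξ.1]⟩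
  refine ⟨r ξ, hrξ, ?_⟩
  have h0 : (u ∘ r) b = u a := by simp [hr]
  have h1 : (u ∘ r) a = u b := by simp [hr]
  rw [h0, h1, hderiv_eq a ha', hra, hd2] at H
  linarith

lemma symm_second_tendsto {u : ℝ → ℝ} {s : Set ℝ} (hs : IsOpen s) {x : ℝ} (hx : x ∈ s)
    (hu : ContDiffOn ℝ 2 u s) :
    Filter.Tendsto (fun ε => (u (x + ε) + u (x - ε) - 2 * u x) / ε ^ 2) (𝓝[>] (0 : ℝ))
      (𝓝 (deriv (deriv u) x)) := by
  obtain ⟨δ0, hδ0, hball⟩ := Metric.isOpen_iff.1 hs x hx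
  have hdd1 : ContDiffOn ℝ 1 (deriv u) s := hu.deriv_of_isOpen hs (by norm_num)
  have hdd0 : ContDiffOn ℝ 0 (deriv (deriv u)) s := hdd1.deriv_of_isOpen hs (by norm_num)
  have hcont : ContinuousAt (deriv (deriv u)) x :=
    hdd0.continuousOn.continuousAt (hs.mem_nhds hx)
  rw [Metric.tendsto_nhdsWithin_nhds]
  intro δ hδ
  obtain ⟨η, hη, hcη⟩ := Metric.continuousAt_iff.1 hcont δ hδ
  refine ⟨min η δ0, lt_min hη hδ0, ?_⟩
  intro ε hε hdε
  have hε0 : 0 < ε := hε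
  have hεlt : ε < min η δ0 := by
    rwa [Real.dist_eq, sub_zero, abs_of_pos hε0] at hdε
  have hsub1 : Set.Icc x (x + ε) ⊆ s := by
    intro y hy
    apply hball
    rw [Metric.mem_ball, Real.dist_eq, abs_lt]
    constructor <;> [linarith [hy.1]; linarith [hy.2, hεlt.trans_le (min_le_right _ _)]]
  have hsub2 : Set.Icc (x - ε) x ⊆ s := by
    intro y hy
    apply hball
    rw [Metric.mem_ball, Real.dist_eq, abs_lt]
    constructor <;> [linarith [hy.1, hεlt.trans_le (min_le_right _ _)]; linarith [hy.2]]
  obtain ⟨ξ₁, hξ₁, H₁⟩ := taylor_one_sided hs hu (by linarith : x < x + ε) hsub1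
  obtain ⟨ξ₂, hξ₂, H₂⟩ := taylor_one_sided_left hs hu (by linarith : x - ε < x) hsub2
  have hb1 : x + ε - x = ε := by ring
  have hb2 : x - (x - ε) = ε := by ring
  rw [hb1] at H₁
  rw [hb2] at H₂
  have hval : (u (x + ε) + u (x - ε) - 2 * u x) / ε ^ 2 =
      (deriv (deriv u) ξ₁ + deriv (deriv u) ξ₂) / 2 := by
    rw [H₁, H₂]
    field_simp
    ring
  rw [hval, Real.dist_eq]
  have hd1 : dist ξ₁ x < η := by
    rw [Real.dist_eq, abs_lt]
    constructor <;> [linarith [hξ₁.1]; linarith [hξ₁.2, hεlt.trans_le (min_le_left _ _)]]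
  have hd2 : dist ξ₂ x < η := by
    rw [Real.dist_eq, abs_lt]
    constructor <;> [linarith [hξ₂.1, hεlt.trans_le (min_le_left _ _)]; linarith [hξ₂.2]]
  have e1 := hcη hd1
  have e2 := hcη hd2
  rw [Real.dist_eq] at e1 e2
  have : |(deriv (deriv u) ξ₁ + deriv (deriv u) ξ₂) / 2 - deriv (deriv u) x| ≤
      (|deriv (deriv u) ξ₁ - deriv (deriv u) x| + |deriv (deriv u) ξ₂ - deriv (deriv u) x|) / 2 := by
    rw [show (deriv (deriv u) ξ₁ + deriv (deriv u) ξ₂) / 2 - deriv (deriv u) x =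
      ((deriv (deriv u) ξ₁ - deriv (deriv u) x) + (deriv (deriv u) ξ₂ - deriv (deriv u) x)) / 2 by ring]
    rw [abs_div, abs_two]
    have := abs_add_le (deriv (deriv u) ξ₁ - deriv (deriv u) x) (deriv (deriv u) ξ₂ - deriv (deriv u) x)
    linarith
  linarith

noncomputable def ccf (κ ε : ℝ) : ℝ :=
  if 0 < κ then Real.cos (Real.sqrt κ * ε)
  else if κ = 0 then 1
  else Real.cosh (Real.sqrt (-κ) * ε)

lemma sk_double (κ ε : ℝ) : sk κ (2 * ε) = 2 * ccf κ ε * sk κ ε := by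
  rcases lt_trichotomy 0 κ with h | h | h
  · simp only [sk, ccf, if_pos h]
    rw [show Real.sqrt κ * (2 * ε) = 2 * (Real.sqrt κ * ε) by ring, Real.sin_two_mul]
    field_simp
  · simp only [sk, ccf, if_neg (not_lt.2 h.ge), if_pos h.symm]
    ring
  · simp only [sk, ccf, if_neg (not_lt.2 h.le), if_neg h.ne]
    rw [show Real.sqrt (-κ) * (2 * ε) = 2 * (Real.sqrt (-κ) * ε) by ring, Real.sinh_two_mul]
    field_simp

lemma sk_pos {κ ε : ℝ} (hε : 0 < ε) (h : 0 < κ → Real.sqrt κ * ε < Real.pi) : 0 < sk κ ε := by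
  rcases lt_trichotomy 0 κ with hκ | hκ | hκ
  · simp only [sk, if_pos hκ]
    have hsq : 0 < Real.sqrt κ := Real.sqrt_pos.2 hκ
    exact div_pos (Real.sin_pos_of_pos_of_lt_pi (by positivity) (h hκ)) hsq
  · simp only [sk, if_neg (not_lt.2 hκ.ge), if_pos hκ.symm]; exact hε
  · simp only [sk, if_neg (not_lt.2 hκ.le), if_neg hκ.ne]
    have hsq : 0 < Real.sqrt (-κ) := Real.sqrt_pos.2 (by linarith)
    exact div_pos (Real.sinh_pos_iff.2 (by positivity)) hsq

lemma ccf_pos {κ ε : ℝ} (h : 0 < κ → Real.sqrt κ * ε < Real.pi / 2) (hε : 0 ≤ ε) :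
    0 < ccf κ ε := by
  rcases lt_trichotomy 0 κ with hκ | hκ | hκ
  · simp only [ccf, if_pos hκ]
    apply Real.cos_pos_of_mem_Ioo
    constructor
    · have h1 : (0:ℝ) < Real.pi / 2 := by positivity
      have h2 : 0 ≤ Real.sqrt κ * ε := by positivity
      linarith
    · exact h hκ
  · simp [ccf, if_neg (not_lt.2 hκ.ge), hκ.symm]
  · simp only [ccf, if_neg (not_lt.2 hκ.le), if_neg hκ.ne]
    exact Real.cosh_pos _

lemma tendsto_comp_div {F : ℝ → ℝ} (hF : HasDerivAt F 1 0) (hF0 : F 0 = 0) {b : ℝ} (hb : 0 < b) :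
    Filter.Tendsto (fun ε => F (b * ε) / ε) (𝓝[>] (0:ℝ)) (𝓝 b) := by
  have h1 : Filter.Tendsto (fun y => F y / y) (𝓝[≠] (0:ℝ)) (𝓝 1) := by
    have h0 := hasDerivAt_iff_tendsto_slope.1 hF
    apply h0.congr
    intro y
    rw [slope_def_field, hF0, sub_zero, sub_zero]
  have h2 : Filter.Tendsto (fun ε => b * ε) (𝓝[>] (0:ℝ)) (𝓝[≠] (0:ℝ)) := by
    rw [tendsto_nhdsWithin_iff]
    constructor
    · have : Filter.Tendsto (fun ε : ℝ => b * ε) (𝓝 0) (𝓝 (b * 0)) :=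
        (continuous_const.mul continuous_id).tendsto 0
      rw [mul_zero] at this
      exact this.mono_left nhdsWithin_le_nhds
    · filter_upwards [eventually_mem_nhdsWithin] with ε (hε : ε ∈ Set.Ioi 0)
      simpa using (mul_pos hb hε).ne'
  have h3 := (h1.comp h2).const_mul b
  rw [mul_one] at h3
  apply h3.congr'
  filter_upwards [eventually_mem_nhdsWithin] with ε (hε : ε ∈ Set.Ioi 0)
  have hbε : b * ε ≠ 0 := (mul_pos hb hε).ne'
  have hε' : (ε:ℝ) ≠ 0 := ne_of_gt hε
  simp only [Function.comp_apply]
  field_simp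

lemma tendsto_ccf (κ : ℝ) :
    Filter.Tendsto (fun ε => (ccf κ ε - 1) / ε ^ 2) (𝓝[>] (0:ℝ)) (𝓝 (-κ / 2)) := by
  rcases lt_trichotomy 0 κ with hκ | hκ | hκ
  · set b : ℝ := Real.sqrt κ / 2 with hb
    have hbpos : 0 < b := by positivity
    have hb2 : b ^ 2 = κ / 4 := by
      rw [hb, div_pow, Real.sq_sqrt hκ.le]; norm_num
    have hsin := tendsto_comp_div (Real.hasDerivAt_sin 0 |>.congr_deriv Real.cos_zero)
      Real.sin_zero hbpos
    have h4 := (hsin.pow 2).const_mul (-2 : ℝ)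
    rw [hb2] at h4
    have : -2 * (κ / 4) = -κ / 2 := by ring
    rw [this] at h4
    apply h4.congr'
    filter_upwards [eventually_mem_nhdsWithin] with ε (hε : ε ∈ Set.Ioi 0)
    have hε' : (ε:ℝ) ≠ 0 := ne_of_gt hε
    have hcos : ccf κ ε - 1 = -2 * Real.sin (b * ε) ^ 2 := by
      simp only [ccf, if_pos hκ]
      have : Real.sqrt κ * ε = 2 * (b * ε) := by rw [hb]; ring
      rw [this, Real.cos_two_mul]
      have := Real.sin_sq_add_cos_sq (b * ε)
      linarith
    rw [hcos]
    field_simp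
  · have : ∀ ε : ℝ, (ccf κ ε - 1) / ε ^ 2 = 0 := by
      intro ε
      simp [ccf, if_neg (not_lt.2 hκ.ge), hκ.symm]
    have h0 : -κ / 2 = 0 := by rw [← hκ]; norm_num
    rw [h0]
    exact tendsto_const_nhds.congr (fun ε => (this ε).symm)
  · set b : ℝ := Real.sqrt (-κ) / 2 with hb
    have hbpos : 0 < b := by
      have : (0:ℝ) < -κ := by linarith
      positivity
    have hb2 : b ^ 2 = -κ / 4 := by
      rw [hb, div_pow, Real.sq_sqrt (by linarith : (0:ℝ) ≤ -κ)]; norm_num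
    have hsinh := tendsto_comp_div (Real.hasDerivAt_sinh 0 |>.congr_deriv Real.cosh_zero)
      Real.sinh_zero hbpos
    have h4 := (hsinh.pow 2).const_mul (2 : ℝ)
    rw [hb2] at h4
    have : 2 * (-κ / 4) = -κ / 2 := by ring
    rw [this] at h4
    apply h4.congr'
    filter_upwards [eventually_mem_nhdsWithin] with ε (hε : ε ∈ Set.Ioi 0)
    have hε' : (ε:ℝ) ≠ 0 := ne_of_gt hε
    have hcosh : ccf κ ε - 1 = 2 * Real.sinh (b * ε) ^ 2 := by
      simp only [ccf, if_neg (not_lt.2 hκ.le), if_neg hκ.ne]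
      have : Real.sqrt (-κ) * ε = 2 * (b * ε) := by rw [hb]; ring
      rw [this, Real.cosh_two_mul]
      have := Real.cosh_sq_sub_sinh_sq (b * ε)
      linarith
    rw [hcosh]
    field_simp

/-- The one-dimensional curvature-dimension inequality `CD(K,N)` for a smooth density
`ρ = e^{−ψ}` on an open interval implies the differential inequality
`ψ'' − (ψ')²/(N−1) ≥ K`. -/
theorem stmt_11 (I : Set ℝ) (hI_open : IsOpen I) (hI_conn : I.OrdConnected)
    (N K : ℝ) (hN : 1 < N)
    (ψ : ℝ → ℝ) (hψ : ContDiffOn ℝ 2 ψ I)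
    (ρ : ℝ → ℝ) (hρ : ∀ t, ρ t = Real.exp (-ψ t))
    (hCD : ∀ s ∈ I, ∀ t ∈ I, s < t →
      (0 < K → t - s < Real.pi * Real.sqrt ((N - 1) / K)) →
      ∀ lam ∈ Set.Ioo (0 : ℝ) 1,
        ρ ((1 - lam) * s + lam * t) ≥
          (sigmaCoeff (K / (N - 1)) (1 - lam) (t - s) * ρ s ^ (1 / (N - 1)) +
            sigmaCoeff (K / (N - 1)) lam (t - s) * ρ t ^ (1 / (N - 1))) ^ (N - 1)) :
    ∀ t ∈ I, deriv (deriv ψ) t - (deriv ψ t) ^ 2 / (N - 1) ≥ K := by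
  intro t0 ht0
  set m := N - 1 with hm
  have hm0 : 0 < m := by rw [hm]; linarith
  set κ := K / m with hκdef
  have hκK : 0 < κ ↔ 0 < K := by
    constructor
    · intro h
      by_contra hK
      push_neg at hK
      have : κ ≤ 0 := div_nonpos_of_nonpos_of_nonneg hK hm0.le
      linarith
    · intro h; exact div_pos h hm0
  set f : ℝ → ℝ := fun t => Real.exp (-ψ t / m) with hf
  have hfpos : ∀ t, 0 < f t := fun t => Real.exp_pos _
  have hfc : ContDiffOn ℝ 2 f I := Real.contDiff_exp.comp_contDiffOn (hψ.neg.div_const m)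
  have hρf : ∀ t, ρ t ^ (1 / m) = f t := by
    intro t
    rw [hρ t, Real.rpow_def_of_pos (Real.exp_pos _), Real.log_exp]
    congr 1
    field_simp
  -- choose δ
  obtain ⟨δ1, hδ1, hball⟩ := Metric.isOpen_iff.1 hI_open t0 ht0
  have hexδ : ∃ δ : ℝ, 0 < δ ∧ δ ≤ δ1 ∧ (0 < κ → δ ≤ Real.pi / (2 * Real.sqrt κ)) := by
    rcases lt_or_ge 0 κ with hκ | hκ
    · have hsq : 0 < Real.sqrt κ := Real.sqrt_pos.2 hκ
      have hπ : 0 < Real.pi / (2 * Real.sqrt κ) := by positivity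
      exact ⟨min δ1 (Real.pi / (2 * Real.sqrt κ)), lt_min hδ1 hπ, min_le_left _ _,
        fun _ => min_le_right _ _⟩
    · exact ⟨δ1, hδ1, le_rfl, fun h => absurd h (not_lt.2 hκ)⟩
  obtain ⟨δ, hδ, hδδ1, hδκ⟩ := hexδ
  -- key pointwise inequality
  have key : ∀ ε : ℝ, ε ∈ Set.Ioo 0 δ →
      (f (t0 + ε) + f (t0 - ε) - 2 * f t0) / ε ^ 2 ≤ 2 * f t0 * ((ccf κ ε - 1) / ε ^ 2) := by
    intro ε ⟨hε0, hεδ⟩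
    have hmem : ∀ y : ℝ, |y - t0| < δ1 → y ∈ I := by
      intro y hy
      exact hball (by rwa [Metric.mem_ball, Real.dist_eq])
    have hsI : t0 - ε ∈ I := hmem _ (by rw [abs_of_nonpos (by linarith)]; linarith)
    have htI : t0 + ε ∈ I := hmem _ (by rw [abs_of_nonneg (by linarith)]; linarith)
    have hst : t0 - ε < t0 + ε := by linarith
    have hsqκε : 0 < κ → Real.sqrt κ * ε < Real.pi / 2 := by
      intro hκ
      have hsq : 0 < Real.sqrt κ := Real.sqrt_pos.2 hκ
      have := lt_of_lt_of_le hεδ (hδκ hκ)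
      calc Real.sqrt κ * ε < Real.sqrt κ * (Real.pi / (2 * Real.sqrt κ)) := by
            exact mul_lt_mul_of_pos_left this hsq
        _ = Real.pi / 2 := by field_simp
    have hπcond : 0 < K → t0 + ε - (t0 - ε) < Real.pi * Real.sqrt (m / K) := by
      intro hK
      have hκ : 0 < κ := hκK.2 hK
      have hsq : 0 < Real.sqrt κ := Real.sqrt_pos.2 hκ
      have h1 : Real.sqrt (m / K) = 1 / Real.sqrt κ := by
        rw [hκdef, one_div, ← Real.sqrt_inv]
        congr 1
        field_simp
      rw [h1]
      have h2 := hsqκε hκ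
      rw [show t0 + ε - (t0 - ε) = 2 * ε by ring]
      rw [mul_one_div, lt_div_iff₀ hsq]
      calc 2 * ε * Real.sqrt κ = 2 * (Real.sqrt κ * ε) := by ring
        _ < 2 * (Real.pi / 2) := by linarith
        _ = Real.pi := by ring
    have hhalf : (1:ℝ)/2 ∈ Set.Ioo (0:ℝ) 1 := by norm_num
    have hCD' := hCD _ hsI _ htI hst hπcond (1/2) hhalf
    have hts : t0 + ε - (t0 - ε) = 2 * ε := by ring
    have hmid : (1 - 1/2 : ℝ) * (t0 - ε) + (1/2) * (t0 + ε) = t0 := by ring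
    rw [hmid, hts] at hCD'
    have h2ε : (2:ℝ) * ε ≠ 0 := by positivity
    have hccf : 0 < ccf κ ε := ccf_pos hsqκε hε0.le
    have hskε : 0 < sk κ ε := sk_pos hε0 (fun hκ => by
      have := hsqκε hκ
      have : Real.sqrt κ * ε < Real.pi / 2 := this
      linarith [Real.pi_pos])
    have hsigma : sigmaCoeff κ (1/2) (2 * ε) = 1 / (2 * ccf κ ε) := by
      rw [sigmaCoeff, if_neg h2ε, show (1/2 : ℝ) * (2 * ε) = ε by ring, sk_double]
      rw [div_eq_div_iff (by positivity) (by positivity)]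
      ring
    have h12 : (1 : ℝ) - 1/2 = 1/2 := by norm_num
    rw [h12, hsigma, hρf, hρf] at hCD'
    -- hCD' : ρ t0 ≥ (1/(2c) * f (t0-ε) + 1/(2c) * f (t0+ε)) ^ m
    set base : ℝ := 1 / (2 * ccf κ ε) * f (t0 - ε) + 1 / (2 * ccf κ ε) * f (t0 + ε) with hbase
    have hbase0 : 0 ≤ base := by
      have := hfpos (t0 - ε); have := hfpos (t0 + ε)
      positivity
    have hft0 : base ≤ f t0 := by
      have h3 := Real.rpow_le_rpow (Real.rpow_nonneg hbase0 m) hCD' (by positivity : (0:ℝ) ≤ 1/m)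
      rw [hρf] at h3
      have h4 : ((base : ℝ) ^ m) ^ (1/m) = base := by
        rw [← Real.rpow_mul hbase0, mul_one_div_cancel hm0.ne', Real.rpow_one]
      rwa [h4] at h3
    have hc2 : (0:ℝ) < 2 * ccf κ ε := by positivity
    have h5 : f (t0 - ε) + f (t0 + ε) ≤ 2 * ccf κ ε * f t0 := by
      have h6 := mul_le_mul_of_nonneg_left hft0 hc2.le
      calc f (t0 - ε) + f (t0 + ε) = 2 * ccf κ ε * base := by
            rw [hbase]; field_simp; try ring
        _ ≤ 2 * ccf κ ε * f t0 := h6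
    rw [show 2 * f t0 * ((ccf κ ε - 1) / ε ^ 2) = 2 * f t0 * (ccf κ ε - 1) / ε ^ 2 by ring]
    rw [div_le_div_iff_of_pos_right (by positivity : (0:ℝ) < ε ^ 2)]
    nlinarith [hfpos t0]
  -- pass to the limit
  have h1 := symm_second_tendsto hI_open ht0 hfc
  have h2 := (tendsto_ccf κ).const_mul (2 * f t0)
  have hlim : deriv (deriv f) t0 ≤ 2 * f t0 * (-κ / 2) := by
    refine le_of_tendsto_of_tendsto h1 h2 ?_
    filter_upwards [Ioo_mem_nhdsGT_of_mem ⟨le_refl (0:ℝ), hδ⟩] with ε hε using key ε hε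
  -- chain rule
  have hψd : ∀ x ∈ I, HasDerivAt ψ (deriv ψ x) x := fun x hx =>
    ((hψ.differentiableOn two_ne_zero).differentiableAt (hI_open.mem_nhds hx)).hasDerivAt
  have hfd : ∀ x ∈ I, HasDerivAt f (f x * (-deriv ψ x / m)) x := by
    intro x hx
    have h3 := (((hψd x hx).neg).div_const m).exp
    simpa [hf] using h3
  have hfderiv : ∀ x ∈ I, deriv f x = f x * (-deriv ψ x / m) := fun x hx => (hfd x hx).deriv
  have hψ'd : HasDerivAt (deriv ψ) (deriv (deriv ψ) t0) t0 :=
    (((hψ.deriv_of_isOpen hI_open (by norm_num) : ContDiffOn ℝ 1 (deriv ψ) I).differentiableOn one_ne_zero).differentiableAt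
      (hI_open.mem_nhds ht0)).hasDerivAt
  have hprod : HasDerivAt (fun x => f x * (-deriv ψ x / m))
      (f t0 * (-deriv ψ t0 / m) * (-deriv ψ t0 / m) + f t0 * (-deriv (deriv ψ) t0 / m)) t0 := by
    have hg : HasDerivAt (fun x => -deriv ψ x / m) (-deriv (deriv ψ) t0 / m) t0 :=
      (hψ'd.neg).div_const m
    exact (hfd t0 ht0).mul hg
  have hdd : deriv (deriv f) t0 =
      f t0 * (-deriv ψ t0 / m) * (-deriv ψ t0 / m) + f t0 * (-deriv (deriv ψ) t0 / m) := by
    have heq : deriv f =ᶠ[𝓝 t0] fun x => f x * (-deriv ψ x / m) := by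
      filter_upwards [hI_open.mem_nhds ht0] with x hx using hfderiv x hx
    rw [heq.deriv_eq, hprod.deriv]
  rw [hdd] at hlim
  -- final algebra
  set P := deriv ψ t0
  set Q := deriv (deriv ψ) t0
  have hfp := hfpos t0
  have halg : P ^ 2 / m ^ 2 - Q / m + K / m ≤ 0 := by
    have h7 : f t0 * (P ^ 2 / m ^ 2 - Q / m + K / m) ≤ 0 := by
      have : 2 * f t0 * (-κ / 2) = f t0 * (-(K / m)) := by rw [hκdef]; ring
      rw [this] at hlim
      have hid : f t0 * (P ^ 2 / m ^ 2 - Q / m + K / m) =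
          (f t0 * (-P / m) * (-P / m) + f t0 * (-Q / m)) - f t0 * -(K / m) := by
        have hmne : m ≠ 0 := hm0.ne'
        field_simp
        ring
      rw [hid]
      linarith
    nlinarith [h7, hfp]
  have h8 : 0 ≤ (m * Q - P ^ 2 - m * K) / m := by
    apply div_nonneg _ hm0.le
    have h9 : m ^ 2 * (P ^ 2 / m ^ 2 - Q / m + K / m) = P ^ 2 - m * Q + m * K := by
      field_simp
    nlinarith [mul_nonpos_of_nonneg_of_nonpos (sq_nonneg m) halg]
  have h10 : (m * Q - P ^ 2 - m * K) / m = Q - P ^ 2 / m - K := by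
    field_simp
  rw [h10] at h8
  rw [ge_iff_le, ← sub_nonneg]
  linarith
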